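/- Every finite nonempty set of terms has a most specific generalisation: there exists a term $M$ such that every term in the set is an instance of $M$, and any other term $M'$ of which every term in the set is an instance is itself more general than $M$. -/

import Mathlib

/-- First-order terms over a signature `F` indexed by arity, with variables. -/
inductive Tm (F : ℕ → Type) : Type
  | var : ℕ → Tm F
  | app : (n : ℕ) → F n → (Fin n → Tm F) → Tm F

/-- Application of a substitution (a map from variables to terms) to a term. -/
def subst {F : ℕ → Type} (σ : ℕ → Tm F) : Tm F → Tm F
  | .var x => σ x
  | .app n f ts => .app n f (fun i => subst σ (ts i))

/-- `s` is more general than `t` iff `t` is an instance of `s`, i.e. `s θ = t`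
for some substitution `θ`. -/
def MoreGeneral {F : ℕ → Type} (s t : Tm F) : Prop := ∃ σ, subst σ s = t

variable {F : ℕ → Type}

open Classical in
noncomputable def lggAux (π : Tm F → Tm F → ℕ) : Tm F → Tm F → Tm F
  | .app n f ss, .app m g ts =>
    if h : m = n then
      if hf : (h ▸ g) = f then
        .app n f (fun i => lggAux π (ss i) (ts (Fin.cast h.symm i)))
      else .var (π (.app n f ss) (.app m g ts))
    else .var (π (.app n f ss) (.app m g ts))
  | s, t => .var (π s t)

open Classical in
noncomputable def sp : Tm F → Tm F → List (Tm F × Tm F)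
  | .app n f ss, .app m g ts =>
    (⟨.app n f ss, .app m g ts⟩ : Tm F × Tm F) ::
    (if h : m = n then
      if hf : (h ▸ g) = f then
        (List.finRange n).flatMap (fun i => sp (ss i) (ts (Fin.cast h.symm i)))
      else []
    else [])
  | s, t => [(s, t)]

theorem subst_var (s : Tm F) : subst Tm.var s = s := by
  induction s with
  | var x => rfl
  | app n f ts ih => simp only [subst]; congr 1; funext i; exact ih i

theorem subst_subst (σ τ : ℕ → Tm F) (s : Tm F) :
    subst σ (subst τ s) = subst (fun x => subst σ (τ x)) s := by
  induction s with
  | var x => rfl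
  | app n f ts ih => simp only [subst]; congr 1; funext i; exact ih i

theorem mem_sp_self (s t : Tm F) : (s, t) ∈ sp s t := by
  cases s <;> cases t <;> rw [sp] <;>
    first
      | exact List.mem_cons_self
      | (intro n f ss m g ts h1 h2; cases h1 <;> cases h2)

theorem sp_closed {a b : Tm F} :
    ∀ {p q : Tm F}, (p, q) ∈ sp a b → sp p q ⊆ sp a b := by
  induction a generalizing b with
  | var x =>
    intro p q hm
    cases b <;> simp [sp] at hm <;> obtain ⟨rfl, rfl⟩ := hm <;> simp [sp]
  | app n f ss ih =>
    intro p q hm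
    cases b with
    | var y =>
      simp [sp] at hm; obtain ⟨rfl, rfl⟩ := hm; simp [sp]
    | app m g ts =>
      rw [sp] at hm
      rcases List.mem_cons.1 hm with h1 | h2
      · obtain ⟨rfl, rfl⟩ := Prod.mk.injEq .. ▸ h1; exact fun x hx => hx
      · split_ifs at h2 with h hf
        · simp only [List.mem_flatMap, List.mem_finRange, true_and] at h2
          obtain ⟨i, hi⟩ := h2
          intro x hx
          rw [sp]
          refine List.mem_cons_of_mem _ ?_
          rw [dif_pos h, dif_pos hf]
          exact List.mem_flatMap.2 ⟨i, List.mem_finRange i, ih i hi hx⟩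
        · simp at h2
        · simp at h2

theorem getD_indexOf' {α} [DecidableEq α] {l : List α} {x : α} (h : x ∈ l) (d : α) :
    l.getD (l.idxOf x) d = x := by
  rw [List.getD_eq_getElem _ _ (List.idxOf_lt_length_iff.2 h)]
  exact List.getElem_idxOf _

theorem lggAux_subst (π : Tm F → Tm F → ℕ) (σ τ : ℕ → Tm F) (u : Tm F) :
    lggAux π (subst σ u) (subst τ u) = subst (fun x => lggAux π (σ x) (τ x)) u := by
  induction u with
  | var x => rfl
  | app n f ts ih =>
    simp only [subst]
    rw [lggAux, dif_pos rfl, dif_pos rfl]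
    congr 1
    funext i
    exact ih i

noncomputable instance instDETm : DecidableEq (Tm F × Tm F) := Classical.decEq _

noncomputable def idx (a b : Tm F) (p q : Tm F) : ℕ := (sp a b).idxOf (p, q)

open Classical in
noncomputable def σL (a b : Tm F) (x : ℕ) : Tm F := ((sp a b).getD x (a, b)).1

open Classical in
noncomputable def σR (a b : Tm F) (x : ℕ) : Tm F := ((sp a b).getD x (a, b)).2

open Classical in
theorem key (a b : Tm F) : ∀ {p q : Tm F}, (p, q) ∈ sp a b →
    subst (σL a b) (lggAux (idx a b) p q) = p ∧
    subst (σR a b) (lggAux (idx a b) p q) = q := by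
  have base : ∀ {p q : Tm F}, (p, q) ∈ sp a b →
      subst (σL a b) (Tm.var (idx a b p q)) = p ∧
      subst (σR a b) (Tm.var (idx a b p q)) = q := by
    intro p q hm
    have h1 : (sp a b).getD (idx a b p q) (a, b) = (p, q) := getD_indexOf' hm (a, b)
    constructor
    · exact congrArg Prod.fst h1
    · exact congrArg Prod.snd h1
  intro p
  induction p with
  | var x =>
    intro q hm
    rw [lggAux]
    · exact base hm
    · intro _ _ _ _ _ _ h1 h2
      cases h1 <;> cases h2
  | app n f ss ih =>
    intro q hm
    cases q with
    | var y =>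
      rw [lggAux]
      · exact base hm
      · intro _ _ _ _ _ _ h1 h2
        cases h1 <;> cases h2
    | app m g ts =>
      by_cases hmn : m = n
      · subst hmn
        by_cases hgf : g = f
        · subst hgf
          rw [lggAux, dif_pos rfl, dif_pos rfl]
          have hchild : ∀ i : Fin m, (ss i, ts (Fin.cast rfl i)) ∈ sp a b := by
            intro i
            apply sp_closed hm
            rw [sp, dif_pos rfl, dif_pos rfl]
            exact List.mem_cons_of_mem _
              (List.mem_flatMap.2 ⟨i, List.mem_finRange i, mem_sp_self _ _⟩)
          constructor
          · simp only [subst]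
            congr 1; funext i; exact (ih i (hchild i)).1
          · simp only [subst]
            congr 1; funext i
            have := (ih i (hchild i)).2
            simpa using this
        · rw [lggAux, dif_pos rfl, dif_neg hgf]
          exact base hm
      · rw [lggAux, dif_neg hmn]
        exact base hm

noncomputable def lgg (a b : Tm F) : Tm F := lggAux (idx a b) a b

theorem lgg_left (a b : Tm F) : MoreGeneral (lgg a b) a :=
  ⟨σL a b, (key a b (mem_sp_self a b)).1⟩

theorem lgg_right (a b : Tm F) : MoreGeneral (lgg a b) b :=
  ⟨σR a b, (key a b (mem_sp_self a b)).2⟩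

theorem lgg_max {a b c : Tm F} (ha : MoreGeneral c a) (hb : MoreGeneral c b) :
    MoreGeneral c (lgg a b) := by
  obtain ⟨σ, rfl⟩ := ha
  obtain ⟨τ, rfl⟩ := hb
  exact ⟨_, (lggAux_subst (idx (subst σ c) (subst τ c)) σ τ c).symm⟩

theorem mg_refl (s : Tm F) : MoreGeneral s s := ⟨Tm.var, subst_var s⟩

theorem mg_trans {s t u : Tm F} (h1 : MoreGeneral s t) (h2 : MoreGeneral t u) :
    MoreGeneral s u := by
  obtain ⟨σ, rfl⟩ := h1
  obtain ⟨τ, rfl⟩ := h2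
  exact ⟨_, (subst_subst τ σ s).symm⟩

theorem msg_list (hd : Tm F) (l : List (Tm F)) :
    ∃ M : Tm F, (∀ t ∈ hd :: l, MoreGeneral M t) ∧
      ∀ M' : Tm F, (∀ t ∈ hd :: l, MoreGeneral M' t) → MoreGeneral M' M := by
  induction l generalizing hd with
  | nil =>
    exact ⟨hd, by simpa using mg_refl hd, fun M' h => by simpa using h hd⟩
  | cons a l ih =>
    obtain ⟨N, hN1, hN2⟩ := ih a
    refine ⟨lgg hd N, ?_, ?_⟩
    · intro t ht
      rcases List.mem_cons.1 ht with rfl | ht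
      · exact lgg_left _ _
      · exact mg_trans (lgg_right _ _) (hN1 t ht)
    · intro M' hM'
      refine lgg_max (hM' hd List.mem_cons_self) (hN2 M' ?_)
      intro t ht
      exact hM' t (List.mem_cons_of_mem _ ht)


/-- every finite nonempty set of terms has a most specific
generalisation: a term `M` of which every term in the set is an instance, and
such that every other term `M'` of which all terms of the set are instances is
more general than `M`. -/
theorem msg_exists {F : ℕ → Type} (E : Finset (Tm F)) (hE : E.Nonempty) :
    ∃ M : Tm F, (∀ t ∈ E, MoreGeneral M t) ∧
      ∀ M' : Tm F, (∀ t ∈ E, MoreGeneral M' t) → MoreGeneral M' M := by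
  have hne : E.toList ≠ [] := by
    simpa [Finset.toList_eq_nil] using hE.ne_empty
  obtain ⟨hd, l, hl⟩ := List.exists_cons_of_ne_nil hne
  obtain ⟨M, h1, h2⟩ := msg_list hd l
  rw [← hl] at h1 h2
  refine ⟨M, fun t ht => h1 t (Finset.mem_toList.2 ht), fun M' hM' => h2 M' ?_⟩
  intro t ht
  exact hM' t (Finset.mem_toList.1 ht)
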